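/- Suppose an instrument is a finite convex combination 𝔍(n) = Σ_i λ_i 𝔍^(i)(n) of pure instruments 𝔍^(i)(n)(ρ) = A^(i)_n ρ (A^(i)_n)* (each with Σ_n (A^(i)_n)* A^(i)_n = 1), with λ_i > 0, Σ_i λ_i = 1. Then for every density operator ρ, with ρ₁ := Σ_n 𝔍(n)(ρ) and p_n := Tr(𝔍(n)(ρ)), one has S(ρ) − S(ρ₁) ≤ H(p). -/

import Mathlib

open Matrix ComplexOrder

def IsDensity {d : Type*} [Fintype d] (ρ : Matrix d d ℂ) : Prop :=
  ρ.PosSemidef ∧ ρ.trace = 1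

open scoped Classical in
/-- Von Neumann entropy, computed from the eigenvalues of a Hermitian matrix. -/
noncomputable def vNE {d : Type*} [Fintype d] [DecidableEq d] (ρ : Matrix d d ℂ) : ℝ :=
  if h : ρ.IsHermitian then ∑ i, Real.negMulLog (h.eigenvalues i) else 0

namespace SzilardAux

open Complex

local notation "conj'" => starRingEnd ℂ

variable {d G : Type*} [Fintype d] [DecidableEq d] [Fintype G]

lemma vNE_eq {X : Matrix d d ℂ} (hX : X.IsHermitian) :
    vNE X = ∑ j, Real.negMulLog (hX.eigenvalues j) := by
  rw [vNE, dif_pos hX]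

omit [DecidableEq d] in
lemma dot_conj_swap (a b : d → ℂ) : star a ⬝ᵥ b = conj' (star b ⬝ᵥ a) := by
  simp only [dotProduct, map_sum, _root_.map_mul, Pi.star_apply, RCLike.star_def,
    Complex.conj_conj]
  exact Finset.sum_congr rfl fun i _ => mul_comm _ _

lemma eb_dot {X : Matrix d d ℂ} (hX : X.IsHermitian) (j k : d) :
    star ⇑(hX.eigenvectorBasis j) ⬝ᵥ ⇑(hX.eigenvectorBasis k) = if j = k then 1 else 0 := by
  have h := Unitary.coe_star_mul_self hX.eigenvectorUnitary
  have h2 : (star (hX.eigenvectorUnitary : Matrix d d ℂ) * hX.eigenvectorUnitary) j k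
      = (1 : Matrix d d ℂ) j k := by rw [h]
  simpa [Matrix.mul_apply, Matrix.one_apply, star_apply, dotProduct,
    Matrix.IsHermitian.eigenvectorUnitary_apply, mul_comm] using h2

lemma eb_complete {X : Matrix d d ℂ} (hX : X.IsHermitian) (a b : d) :
    ∑ j, hX.eigenvectorBasis j a * conj' (hX.eigenvectorBasis j b)
      = (1 : Matrix d d ℂ) a b := by
  have h := Unitary.coe_mul_star_self hX.eigenvectorUnitary
  have h2 : ((hX.eigenvectorUnitary : Matrix d d ℂ) * star (hX.eigenvectorUnitary : Matrix d d ℂ)) a b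
      = (1 : Matrix d d ℂ) a b := by
    rw [show star (hX.eigenvectorUnitary : Matrix d d ℂ)
      = ((star hX.eigenvectorUnitary : unitary (Matrix d d ℂ)) : Matrix d d ℂ) from rfl, h]
  simpa [Matrix.mul_apply, star_apply, Matrix.IsHermitian.eigenvectorUnitary_apply] using h2

lemma qf_spectral {X : Matrix d d ℂ} (hX : X.IsHermitian) (w : d → ℂ) :
    star w ⬝ᵥ X *ᵥ w
      = ∑ j, (hX.eigenvalues j : ℂ) * ((normSq (star ⇑(hX.eigenvectorBasis j) ⬝ᵥ w) : ℝ) : ℂ) := by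
  set U : Matrix d d ℂ := (hX.eigenvectorUnitary : Matrix d d ℂ) with hU
  have hc : ∀ j, (star U *ᵥ w) j = star ⇑(hX.eigenvectorBasis j) ⬝ᵥ w := by
    intro j
    simp [mulVec, dotProduct, star_apply, hU, Matrix.IsHermitian.eigenvectorUnitary_apply]
  conv_lhs => rw [hX.spectral_theorem, Unitary.conjStarAlgAut_apply]
  rw [← mulVec_mulVec, ← mulVec_mulVec, dotProduct_mulVec (star w) U]
  have hsw : star w ᵥ* U = star (star U *ᵥ w) := by
    rw [star_mulVec]
    simp [hU, Matrix.star_eq_conjTranspose, conjTranspose_conjTranspose]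
  rw [hsw, dotProduct]
  apply Finset.sum_congr rfl
  intro j _
  rw [Pi.star_apply, hc j]
  set z := star ⇑(hX.eigenvectorBasis j) ⬝ᵥ w
  have : (diagonal (RCLike.ofReal ∘ hX.eigenvalues) *ᵥ (star U *ᵥ w)) j
      = (hX.eigenvalues j : ℂ) * z := by
    rw [mulVec_diagonal, hc j]
    rfl
  rw [this]
  rw [show star z = conj' z from rfl, Complex.normSq_eq_conj_mul_self]
  ring

lemma trace_eq_sum_eigs {X : Matrix d d ℂ} (hX : X.IsHermitian) :
    X.trace = ∑ j, (hX.eigenvalues j : ℂ) := by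
  conv_lhs => rw [hX.spectral_theorem, Unitary.conjStarAlgAut_apply]
  rw [Matrix.trace_mul_cycle]
  rw [show star ((hX.eigenvectorUnitary : Matrix d d ℂ)) * (hX.eigenvectorUnitary : Matrix d d ℂ) = 1
    from Unitary.coe_star_mul_self _]
  simp [Matrix.trace_diagonal]

lemma qf_spectral_re {X : Matrix d d ℂ} (hX : X.IsHermitian) (w : d → ℂ) :
    (star w ⬝ᵥ X *ᵥ w).re
      = ∑ j, hX.eigenvalues j * normSq (star ⇑(hX.eigenvectorBasis j) ⬝ᵥ w) := by
  rw [qf_spectral hX w]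
  rw [Complex.re_sum]
  apply Finset.sum_congr rfl
  intro j _
  rw [← Complex.ofReal_mul]
  exact Complex.ofReal_re _

lemma overlap_sum (u : G → d → ℂ)
    (hu : ∀ a b, ∑ g, u g a * conj' (u g b) = (1 : Matrix d d ℂ) a b) (x : d → ℂ) :
    ∑ g, ((normSq (star (u g) ⬝ᵥ x) : ℝ) : ℂ) = star x ⬝ᵥ x := by
  have step : ∀ g : G, ((normSq (star (u g) ⬝ᵥ x) : ℝ) : ℂ)
      = ∑ a, ∑ b, (conj' (x a) * x b) * (u g a * conj' (u g b)) := by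
    intro g
    rw [Complex.normSq_eq_conj_mul_self]
    rw [dotProduct, map_sum, Finset.sum_mul_sum]
    apply Finset.sum_congr rfl; intro a _
    apply Finset.sum_congr rfl; intro b _
    simp only [Pi.star_apply, RCLike.star_def, _root_.map_mul, Complex.conj_conj]
    ring
  rw [Finset.sum_congr rfl (fun g _ => step g), Finset.sum_comm]
  have : ∀ a, ∑ g : G, ∑ b, (conj' (x a) * x b) * (u g a * conj' (u g b))
      = ∑ b, (conj' (x a) * x b) * (1 : Matrix d d ℂ) a b := by
    intro a
    rw [Finset.sum_comm]
    exact Finset.sum_congr rfl fun b _ => by rw [← Finset.mul_sum, hu a b]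
  rw [Finset.sum_congr rfl fun a _ => this a]
  simp [Matrix.one_apply, dotProduct, mul_comm]

lemma jensen_negMulLog {ι : Type*} [Fintype ι] (c x : ι → ℝ)
    (hc : ∀ j, 0 ≤ c j) (hcs : ∑ j, c j ≤ 1) (hx : ∀ j, 0 ≤ x j) :
    ∑ j, c j * Real.negMulLog (x j) ≤ Real.negMulLog (∑ j, c j * x j) := by
  classical
  set w : Option ι → ℝ := fun o => o.elim (1 - ∑ j, c j) c with hw
  set q : Option ι → ℝ := fun o => o.elim 0 x with hq
  have h := Real.concaveOn_negMulLog.le_map_sum (t := Finset.univ) (w := w) (p := q)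
    (fun o _ => by cases o with
      | none => simp only [hw, Option.elim]; linarith
      | some j => exact hc j)
    (by simp [hw, Fintype.sum_option])
    (fun o _ => by cases o with
      | none => simp [hq]
      | some j => exact hx j)
  simpa [hq, hw, Fintype.sum_option, smul_eq_mul] using h

lemma klein_scalar {μ a : ℝ} (hμ : 0 ≤ μ) (ha : 0 < a) :
    Real.negMulLog μ ≤ -μ * Real.log a + a - μ := by
  rcases eq_or_lt_of_le hμ with h | h
  · simp [← h, Real.negMulLog]; positivity
  · have hlog : Real.log (a / μ) ≤ a / μ - 1 :=
      Real.log_le_sub_one_of_pos (by positivity)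
    rw [Real.log_div (ne_of_gt ha) (ne_of_gt h)] at hlog
    have := mul_le_mul_of_nonneg_left hlog hμ
    rw [mul_sub, mul_sub, mul_div_cancel₀ _ (ne_of_gt h)] at this
    simp only [Real.negMulLog]
    nlinarith


omit [DecidableEq d] in
lemma dot_self_eq (x : d → ℂ) :
    star x ⬝ᵥ x = ((∑ a, normSq (x a) : ℝ) : ℂ) := by
  push_cast
  simp only [dotProduct, Pi.star_apply, RCLike.star_def]
  exact Finset.sum_congr rfl fun a _ => (Complex.normSq_eq_conj_mul_self).symm ▸ rfl

omit [DecidableEq d] in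
lemma qf_smul (c : ℂ) (M : Matrix d d ℂ) (x : d → ℂ) :
    star x ⬝ᵥ (c • M) *ᵥ x = c * (star x ⬝ᵥ M *ᵥ x) := by
  rw [smul_mulVec, dotProduct_smul, smul_eq_mul]

omit [DecidableEq d] in
lemma qf_sum {N : Type*} [Fintype N] (f : N → Matrix d d ℂ) (x : d → ℂ) :
    star x ⬝ᵥ (∑ n, f n) *ᵥ x = ∑ n, star x ⬝ᵥ (f n) *ᵥ x := by
  have h1 : (∑ n, f n) *ᵥ x = ∑ n, (f n) *ᵥ x := by
    ext a
    simp only [mulVec, dotProduct, Finset.sum_apply, Matrix.sum_apply, Finset.sum_mul]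
    rw [Finset.sum_comm]
  rw [h1]
  simp only [dotProduct, Finset.sum_apply, Finset.mul_sum]
  rw [Finset.sum_comm]

omit [DecidableEq d] in
lemma psd_qf_re_nonneg {M : Matrix d d ℂ} (hM : M.PosSemidef) (x : d → ℂ) :
    0 ≤ (star x ⬝ᵥ M *ᵥ x).re := by
  have := hM.dotProduct_mulVec_nonneg x
  exact_mod_cast (Complex.le_def.mp this).1

omit [DecidableEq d] in
lemma psd_sum {N : Type*} [Fintype N] (f : N → Matrix d d ℂ)
    (h : ∀ n, (f n).PosSemidef) : (∑ n, f n).PosSemidef := by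
  refine posSemidef_iff_dotProduct_mulVec.mpr ⟨?_, ?_⟩
  · show (∑ n, f n)ᴴ = ∑ n, f n
    rw [conjTranspose_sum]
    exact Finset.sum_congr rfl fun n _ => (h n).1
  · intro x
    rw [qf_sum]
    exact Finset.sum_nonneg fun n _ => (h n).dotProduct_mulVec_nonneg x

omit [DecidableEq d] in
lemma psd_smul_real {M : Matrix d d ℂ} (hM : M.PosSemidef) {c : ℝ} (hc : 0 ≤ c) :
    (((c : ℝ) : ℂ) • M).PosSemidef := by
  refine posSemidef_iff_dotProduct_mulVec.mpr ⟨?_, ?_⟩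
  · show (((c : ℝ) : ℂ) • M)ᴴ = ((c : ℝ) : ℂ) • M
    rw [conjTranspose_smul, Complex.star_def, Complex.conj_ofReal, hM.1]
  · intro x
    rw [qf_smul]
    have h1 := hM.dotProduct_mulVec_nonneg x
    have h2 : star x ⬝ᵥ M *ᵥ x = (((star x ⬝ᵥ M *ᵥ x).re : ℝ) : ℂ) := by
      have him := (Complex.le_def.mp h1).2
      apply Complex.ext
      · simp
      · simpa using him.symm
    rw [h2, ← Complex.ofReal_mul]
    rw [Complex.zero_le_real]
    exact mul_nonneg hc (psd_qf_re_nonneg hM x)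

lemma qf_eigen {X : Matrix d d ℂ} (hX : X.IsHermitian) (k : d) :
    star ⇑(hX.eigenvectorBasis k) ⬝ᵥ X *ᵥ ⇑(hX.eigenvectorBasis k)
      = ((hX.eigenvalues k : ℝ) : ℂ) := by
  rw [hX.mulVec_eigenvectorBasis, dotProduct_smul, eb_dot hX k k, if_pos rfl]
  simp [Complex.real_smul]

omit [DecidableEq d] in
lemma qf_conj (M ρ : Matrix d d ℂ) (v : d → ℂ) :
    star (Mᴴ *ᵥ v) ⬝ᵥ ρ *ᵥ (Mᴴ *ᵥ v) = star v ⬝ᵥ (M * ρ * Mᴴ) *ᵥ v := by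
  rw [star_mulVec, conjTranspose_conjTranspose, ← dotProduct_mulVec, mulVec_mulVec, mulVec_mulVec,
    Matrix.mul_assoc]

lemma psd_trace_re_nonneg {M : Matrix d d ℂ} (hM : M.PosSemidef) : 0 ≤ M.trace.re := by
  rw [trace_eq_sum_eigs hM.1, Complex.re_sum]
  refine Finset.sum_nonneg fun j _ => ?_
  simpa using hM.eigenvalues_nonneg j

lemma frame_from_kraus {N : Type*} [Fintype N]
    (M : N → Matrix d d ℂ) (hM : ∑ n, (M n)ᴴ * M n = 1)
    (V : N → d → d → ℂ)
    (hV : ∀ n a b, ∑ k, V n k a * conj' (V n k b) = (1 : Matrix d d ℂ) a b)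
    (a b : d) :
    ∑ α : N × d, ((M α.1)ᴴ *ᵥ V α.1 α.2) a * conj' (((M α.1)ᴴ *ᵥ V α.1 α.2) b)
      = (1 : Matrix d d ℂ) a b := by
  rw [Fintype.sum_prod_type]
  have step : ∀ n, ∑ k, ((M n)ᴴ *ᵥ V n k) a * conj' (((M n)ᴴ *ᵥ V n k) b)
      = ((M n)ᴴ * M n) a b := by
    intro n
    have expand : ∀ k, ((M n)ᴴ *ᵥ V n k) a * conj' (((M n)ᴴ *ᵥ V n k) b)
        = ∑ x, ∑ y, (conj' (M n x a) * M n y b) * (V n k x * conj' (V n k y)) := by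
      intro k
      simp only [mulVec, dotProduct, conjTranspose_apply, map_sum, _root_.map_mul,
        Complex.conj_conj, RCLike.star_def]
      rw [Finset.sum_mul_sum]
      apply Finset.sum_congr rfl; intro x _
      apply Finset.sum_congr rfl; intro y _
      ring
    rw [Finset.sum_congr rfl fun k _ => expand k, Finset.sum_comm]
    have inner : ∀ x, ∑ k, ∑ y, (conj' (M n x a) * M n y b) * (V n k x * conj' (V n k y))
        = ∑ y, (conj' (M n x a) * M n y b) * (1 : Matrix d d ℂ) x y := by
      intro x
      rw [Finset.sum_comm]
      exact Finset.sum_congr rfl fun y _ => by rw [← Finset.mul_sum, hV n x y]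
    rw [Finset.sum_congr rfl fun x _ => inner x]
    simp [Matrix.one_apply, Matrix.mul_apply, conjTranspose_apply]
  rw [Finset.sum_congr rfl fun n _ => step n]
  have hfin : ∑ n, ((M n)ᴴ * M n) a b = (∑ n, (M n)ᴴ * M n) a b :=
    (Matrix.sum_apply a b Finset.univ _).symm
  rw [hfin, hM]

-- Lemma A: frame entropy bound
lemma frame_entropy_bound {F : Type*} [Fintype F]
    {X : Matrix d d ℂ} (hX : X.PosSemidef) (w : F → d → ℂ)
    (hframe : ∀ a b : d, ∑ α, w α a * conj' (w α b) = (1 : Matrix d d ℂ) a b) :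
    vNE X ≤ ∑ α, Real.negMulLog ((star (w α) ⬝ᵥ X *ᵥ w α).re) := by
  have hH : X.IsHermitian := hX.1
  set v : d → d → ℂ := fun j => ⇑(hH.eigenvectorBasis j) with hv
  set c : F → d → ℝ := fun α j => normSq (star (v j) ⬝ᵥ w α) with hc
  have hcnn : ∀ α j, 0 ≤ c α j := fun α j => normSq_nonneg _
  have hswap : ∀ α j, normSq (star (w α) ⬝ᵥ v j) = c α j := by
    intro α j
    rw [dot_conj_swap (w α) (v j), Complex.normSq_conj]
  have hvcomplete : ∀ a b, ∑ j, v j a * conj' (v j b) = (1 : Matrix d d ℂ) a b :=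
    fun a b => eb_complete hH a b
  -- column sums = 1
  have hcol : ∀ j, ∑ α, c α j = 1 := by
    intro j
    have h1 := overlap_sum w hframe (v j)
    rw [eb_dot hH j j, if_pos rfl] at h1
    have h2 : ∑ α, ((c α j : ℝ) : ℂ) = 1 := by
      rw [← h1]
      exact Finset.sum_congr rfl fun α _ => by rw [hswap α j]
    exact_mod_cast h2
  -- row sums s α ≤ 1
  set s : F → ℝ := fun α => ∑ j, c α j with hs
  have hrow : ∀ α, star (w α) ⬝ᵥ w α = ((s α : ℝ) : ℂ) := by
    intro α
    have h1 := overlap_sum v hvcomplete (w α)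
    rw [← h1, hs]
    push_cast
    rfl
  have hsle : ∀ α, s α ≤ 1 := by
    intro α
    have h1 := overlap_sum w hframe (w α)
    rw [hrow α] at h1
    have h2 : ∑ β, normSq (star (w β) ⬝ᵥ w α) = s α := by
      exact_mod_cast h1
    have h3 : normSq (star (w α) ⬝ᵥ w α) ≤ ∑ β, normSq (star (w β) ⬝ᵥ w α) :=
      Finset.single_le_sum (f := fun β => normSq (star (w β) ⬝ᵥ w α))
        (fun β _ => normSq_nonneg _) (Finset.mem_univ α)
    rw [hrow α, h2] at h3
    have h4 : s α * s α ≤ s α := by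
      simpa [Complex.normSq_ofReal] using h3
    nlinarith [Finset.sum_nonneg (fun j (_ : j ∈ Finset.univ) => hcnn α j)]
  -- eigenvalues nonneg
  have hev : ∀ j, 0 ≤ hH.eigenvalues j := fun j => hX.eigenvalues_nonneg j
  -- main chain
  rw [vNE_eq hH]
  have key : ∑ j, Real.negMulLog (hH.eigenvalues j)
      = ∑ α, ∑ j, c α j * Real.negMulLog (hH.eigenvalues j) := by
    rw [Finset.sum_comm]
    exact Finset.sum_congr rfl fun j _ => by
      rw [← Finset.sum_mul, hcol j, one_mul]
  rw [key]
  apply Finset.sum_le_sum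
  intro α _
  have hjensen := jensen_negMulLog (c α) (fun j => hH.eigenvalues j)
    (hcnn α) (hsle α) hev
  have hqf : (star (w α) ⬝ᵥ X *ᵥ w α).re = ∑ j, c α j * hH.eigenvalues j := by
    rw [qf_spectral_re hH (w α)]
    exact Finset.sum_congr rfl fun j _ => mul_comm _ _
  rw [hqf]
  exact hjensen

-- Lemma K: Klein-type bound.
lemma klein_bound {B τ : Matrix d d ℂ} (hB : B.PosSemidef) (hτ : τ.PosSemidef)
    (hτtr : τ.trace = 1)
    (hsupp : ∀ k, hτ.1.eigenvalues k = 0 →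
      (star ⇑(hτ.1.eigenvectorBasis k) ⬝ᵥ B *ᵥ ⇑(hτ.1.eigenvectorBasis k)).re = 0) :
    vNE B ≤ Real.negMulLog (B.trace.re)
      + ∑ k, (- Real.log (hτ.1.eigenvalues k))
          * (star ⇑(hτ.1.eigenvectorBasis k) ⬝ᵥ B *ᵥ ⇑(hτ.1.eigenvectorBasis k)).re := by
  have hHB : B.IsHermitian := hB.1
  have hHτ : τ.IsHermitian := hτ.1
  set μ : d → ℝ := fun j => hHB.eigenvalues j with hμdef
  set r : d → ℝ := fun k => hHτ.eigenvalues k with hrdef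
  set u : d → d → ℂ := fun j => ⇑(hHB.eigenvectorBasis j) with hu
  set v : d → d → ℂ := fun k => ⇑(hHτ.eigenvectorBasis k) with hv
  set c : d → d → ℝ := fun j k => normSq (star (v k) ⬝ᵥ u j) with hcdef
  have hμnn : ∀ j, 0 ≤ μ j := fun j => hB.eigenvalues_nonneg j
  have hrnn : ∀ k, 0 ≤ r k := fun k => hτ.eigenvalues_nonneg k
  have hcnn : ∀ j k, 0 ≤ c j k := fun j k => normSq_nonneg _
  -- quadratic forms Q k
  set Q : d → ℝ := fun k => (star (v k) ⬝ᵥ B *ᵥ v k).re with hQdef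
  have hQ : ∀ k, Q k = ∑ j, μ j * c j k := by
    intro k
    rw [hQdef]
    simp only
    rw [qf_spectral_re hHB (v k)]
    refine Finset.sum_congr rfl fun j _ => ?_
    congr 1
    rw [hcdef]
    simp only
    rw [dot_conj_swap (v k) (u j), Complex.normSq_conj]
  -- row sums of c (over k) are 1
  have hrowsum : ∀ j, ∑ k, c j k = 1 := by
    intro j
    have h1 := overlap_sum v (fun a b => eb_complete hHτ a b) (u j)
    rw [eb_dot hHB j j, if_pos rfl] at h1
    exact_mod_cast h1
  -- column sums of c (over j) are 1
  have hcolsum : ∀ k, ∑ j, c j k = 1 := by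
    intro k
    have h1 := overlap_sum u (fun a b => eb_complete hHB a b) (v k)
    rw [eb_dot hHτ k k, if_pos rfl] at h1
    have h2 : ∑ j, ((c j k : ℝ) : ℂ) = 1 := by
      rw [← h1]
      refine Finset.sum_congr rfl fun j _ => ?_
      rw [hcdef]
      simp only
      rw [dot_conj_swap (v k) (u j), Complex.normSq_conj]
    exact_mod_cast h2
  -- trace identities
  obtain ⟨q, hqdef⟩ : ∃ q : ℝ, q = B.trace.re := ⟨_, rfl⟩
  rw [← hqdef]
  have hq : q = ∑ j, μ j := by
    rw [hqdef, trace_eq_sum_eigs hHB]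
    rw [Complex.re_sum]
    push_cast
    simp
    rfl
  have hrsum : ∑ k, r k = 1 := by
    have h1 := trace_eq_sum_eigs hHτ
    rw [hτtr] at h1
    have h2 : ((1 : ℝ) : ℂ) = ((∑ k, r k : ℝ) : ℂ) := by push_cast; simpa using h1
    exact_mod_cast h2.symm
  have hqnn : 0 ≤ q := by
    rw [hq]; exact Finset.sum_nonneg fun j _ => hμnn j
  rcases eq_or_lt_of_le hqnn with hq0 | hqpos
  · -- q = 0 : all eigenvalues vanish
    have hμ0 : ∀ j, μ j = 0 := by
      intro j
      have h0 : ∑ j, μ j = 0 := by rw [← hq, ← hq0]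
      exact (Finset.sum_eq_zero_iff_of_nonneg (fun j _ => hμnn j)).mp h0 j (Finset.mem_univ j)
    have hQ0 : ∀ k, (star (v k) ⬝ᵥ B *ᵥ v k).re = 0 := by
      intro k
      have := hQ k
      rw [hQdef] at this
      simp only at this
      rw [show (star (v k) ⬝ᵥ B *ᵥ v k).re = Q k from rfl, hQ k]
      exact Finset.sum_eq_zero fun j _ => by rw [hμ0 j, zero_mul]
    have hlhs : vNE B = 0 := by
      rw [vNE_eq hHB]
      exact Finset.sum_eq_zero fun j _ => by
        show Real.negMulLog (μ j) = 0
        rw [hμ0 j, Real.negMulLog_zero]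
    rw [hlhs, ← hq0, Real.negMulLog_zero]
    have hz : ∑ k, (- Real.log (hHτ.eigenvalues k)) * (star (v k) ⬝ᵥ B *ᵥ v k).re = 0 :=
      Finset.sum_eq_zero fun k _ => by rw [hQ0 k, mul_zero]
    rw [show (∑ k, (- Real.log (hτ.1.eigenvalues k))
          * (star ⇑(hτ.1.eigenvectorBasis k) ⬝ᵥ B *ᵥ ⇑(hτ.1.eigenvectorBasis k)).re)
        = ∑ k, (- Real.log (hHτ.eigenvalues k)) * (star (v k) ⬝ᵥ B *ᵥ v k).re from rfl, hz]
    simp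
  · -- q > 0
    have hzero : ∀ j k, r k = 0 → μ j * c j k = 0 := by
      intro j k hrk
      have h0 : Q k = 0 := hsupp k hrk
      rw [hQ k] at h0
      exact (Finset.sum_eq_zero_iff_of_nonneg
        (fun j _ => mul_nonneg (hμnn j) (hcnn j k))).mp h0 j (Finset.mem_univ j)
    -- pointwise Klein
    have hpt : ∀ j k, c j k * Real.negMulLog (μ j)
        ≤ c j k * (-(μ j) * Real.log (q * r k) + q * r k - μ j) := by
      intro j k
      rcases eq_or_lt_of_le (hrnn k) with hrk | hrk
      · have h1 : μ j * c j k = 0 := hzero j k hrk.symm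
        rcases mul_eq_zero.mp h1 with h | h
        · rw [h]
          simp [← hrk, Real.negMulLog]
        · rw [h]
          simp
      · have := klein_scalar (hμnn j) (mul_pos hqpos hrk)
        exact mul_le_mul_of_nonneg_left this (hcnn j k)
    have hsum : ∑ j, ∑ k, c j k * Real.negMulLog (μ j)
        ≤ ∑ j, ∑ k, c j k * (-(μ j) * Real.log (q * r k) + q * r k - μ j) :=
      Finset.sum_le_sum fun j _ => Finset.sum_le_sum fun k _ => hpt j k
    have hlhs : ∑ j, ∑ k, c j k * Real.negMulLog (μ j) = vNE B := by
      rw [vNE_eq hHB]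
      refine Finset.sum_congr rfl fun j _ => ?_
      rw [← Finset.sum_mul, hrowsum j, one_mul]
    -- expand the log of the product
    have hlog : ∀ j k, c j k * (-(μ j) * Real.log (q * r k) + q * r k - μ j)
        = (-(c j k * μ j) * Real.log q) + ((-Real.log (r k)) * (μ j * c j k))
          + q * (r k * c j k) - c j k * μ j := by
      intro j k
      rcases eq_or_lt_of_le (hrnn k) with hrk | hrk
      · have h1 : μ j * c j k = 0 := hzero j k hrk.symm
        rw [← hrk, mul_zero, Real.log_zero]
        linear_combination Real.log q * h1
      · rw [Real.log_mul (ne_of_gt hqpos) (ne_of_gt hrk)]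
        ring
    -- sum the four pieces
    have hrhs : ∑ j, ∑ k, c j k * (-(μ j) * Real.log (q * r k) + q * r k - μ j)
        = Real.negMulLog q + ∑ k, (- Real.log (r k)) * Q k := by
      rw [Finset.sum_congr rfl fun j _ => Finset.sum_congr rfl fun k _ => hlog j k]
      have hsplit : ∀ j, ∑ k, ((-(c j k * μ j) * Real.log q) + ((-Real.log (r k)) * (μ j * c j k))
            + q * (r k * c j k) - c j k * μ j)
          = (∑ k, (-(c j k * μ j) * Real.log q)) + (∑ k, (-Real.log (r k)) * (μ j * c j k))
            + (∑ k, q * (r k * c j k)) - ∑ k, c j k * μ j := by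
        intro j
        rw [Finset.sum_sub_distrib, Finset.sum_add_distrib, Finset.sum_add_distrib]
      rw [Finset.sum_congr rfl fun j _ => hsplit j]
      rw [Finset.sum_sub_distrib, Finset.sum_add_distrib, Finset.sum_add_distrib]
      have hT1 : ∑ j, ∑ k, (-(c j k * μ j) * Real.log q) = -(q * Real.log q) := by
        calc ∑ j, ∑ k, (-(c j k * μ j) * Real.log q)
            = ∑ j, (∑ k, c j k) * (-(μ j) * Real.log q) := by
              refine Finset.sum_congr rfl fun j _ => ?_
              rw [Finset.sum_mul]
              exact Finset.sum_congr rfl fun k _ => by ring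
          _ = ∑ j, (-(μ j) * Real.log q) :=
              Finset.sum_congr rfl fun j _ => by rw [hrowsum j, one_mul]
          _ = -(q * Real.log q) := by
              rw [← Finset.sum_mul]
              rw [show (∑ j, -(μ j)) = -(∑ j, μ j) by rw [Finset.sum_neg_distrib]]
              rw [neg_mul, ← hq]
      have hT2 : ∑ j, ∑ k, ((-Real.log (r k)) * (μ j * c j k))
          = ∑ k, (- Real.log (r k)) * Q k := by
        rw [Finset.sum_comm]
        refine Finset.sum_congr rfl fun k _ => ?_
        rw [← Finset.mul_sum, ← hQ k]
      have hT3 : ∑ j, ∑ k, q * (r k * c j k) = q := by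
        rw [Finset.sum_comm]
        have : ∀ k, ∑ j, q * (r k * c j k) = q * r k := by
          intro k
          rw [← Finset.mul_sum, ← Finset.mul_sum, hcolsum k, mul_one]
        rw [Finset.sum_congr rfl fun k _ => this k, ← Finset.mul_sum, hrsum, mul_one]
      have hT4 : ∑ j, ∑ k, c j k * μ j = q := by
        have : ∀ j, ∑ k, c j k * μ j = μ j := by
          intro j
          rw [← Finset.sum_mul, hrowsum j, one_mul]
        rw [Finset.sum_congr rfl fun j _ => this j, ← hq]
      rw [hT1, hT2, hT3, hT4, Real.negMulLog]
      ring
    have hfinal : vNE B ≤ Real.negMulLog q + ∑ k, (- Real.log (r k)) * Q k := by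
      rw [← hlhs, ← hrhs]
      exact hsum
    exact hfinal

end SzilardAux

open SzilardAux

/-- Corollary 1: the Szilard bound for convex combinations of pure instruments. -/
theorem szilard_bound_convex_combination_of_pure_instruments
    {d N I : Type*} [Fintype d] [DecidableEq d] [Fintype N] [Fintype I]
    (A : I → N → Matrix d d ℂ)
    (hA : ∀ i, ∑ n, (A i n)ᴴ * A i n = 1)
    (lam : I → ℝ) (hlam : ∀ i, 0 < lam i) (hlamsum : ∑ i, lam i = 1)
    (𝔍 : N → Matrix d d ℂ → Matrix d d ℂ)
    (h𝔍 : ∀ n σ, 𝔍 n σ = ∑ i, ((lam i : ℝ) : ℂ) • (A i n * σ * (A i n)ᴴ))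
    (ρ : Matrix d d ℂ) (hρ : IsDensity ρ)
    (ρ₁ : Matrix d d ℂ) (hρ₁ : ρ₁ = ∑ n, 𝔍 n ρ)
    (p : N → ℝ) (hp : ∀ n, p n = ((𝔍 n ρ).trace).re) :
    vNE ρ - vNE ρ₁ ≤ ∑ n, Real.negMulLog (p n) := by
  classical
  obtain ⟨hρpsd, hρtr⟩ := hρ
  set B : I → N → Matrix d d ℂ := fun i n => A i n * ρ * (A i n)ᴴ with hBdef
  have hBpsd : ∀ i n, (B i n).PosSemidef := fun i n => hρpsd.mul_mul_conjTranspose_same (A i n)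
  set σ : I → Matrix d d ℂ := fun i => ∑ n, B i n with hσdef
  have hσpsd : ∀ i, (σ i).PosSemidef := fun i => psd_sum _ (fun n => hBpsd i n)
  have htrB : ∀ i, ∑ n, (B i n).trace = 1 := by
    intro i
    have h1 : ∀ n, (B i n).trace = ((A i n)ᴴ * A i n * ρ).trace := by
      intro n
      rw [show B i n = A i n * ρ * (A i n)ᴴ from rfl, Matrix.trace_mul_comm, ← Matrix.mul_assoc]
    rw [Finset.sum_congr rfl fun n _ => h1 n, ← Matrix.trace_sum,
      show (∑ n, (A i n)ᴴ * A i n * ρ) = (∑ n, (A i n)ᴴ * A i n) * ρ from (Finset.sum_mul _ _ _).symm,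
      hA i, Matrix.one_mul, hρtr]
  have hσtr : ∀ i, (σ i).trace = 1 := by
    intro i
    rw [show σ i = ∑ n, B i n from rfl, Matrix.trace_sum, htrB i]
  set pI : I → N → ℝ := fun i n => ((B i n).trace).re with hpIdef
  have hpInn : ∀ i n, 0 ≤ pI i n := fun i n => psd_trace_re_nonneg (hBpsd i n)
  -- p decomposition
  have hpdec : ∀ n, p n = ∑ i, lam i * pI i n := by
    intro n
    rw [hp n, h𝔍 n ρ, Matrix.trace_sum, Complex.re_sum]
    refine Finset.sum_congr rfl fun i _ => ?_
    rw [Matrix.trace_smul, smul_eq_mul, Complex.re_ofReal_mul]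
  -- ρ₁ decomposition
  have hρ₁eq : ρ₁ = ∑ i, ((lam i : ℝ) : ℂ) • σ i := by
    rw [hρ₁, Finset.sum_congr rfl fun n (_ : n ∈ Finset.univ) => h𝔍 n ρ, Finset.sum_comm]
    exact Finset.sum_congr rfl fun i _ => (Finset.smul_sum).symm
  have hρ₁psd : ρ₁.PosSemidef := by
    rw [hρ₁eq]
    exact psd_sum _ fun i => psd_smul_real (hσpsd i) (hlam i).le
  -- STEP 1
  have step1 : ∀ i, vNE ρ ≤ ∑ n, vNE (B i n) := by
    intro i
    set w : N × d → d → ℂ :=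
      fun α => (A i α.1)ᴴ *ᵥ ⇑((hBpsd i α.1).1.eigenvectorBasis α.2) with hwdef
    have hframe : ∀ a b, ∑ α, w α a * (starRingEnd ℂ) (w α b) = (1 : Matrix d d ℂ) a b :=
      frame_from_kraus (A i) (hA i)
        (fun n k => ⇑((hBpsd i n).1.eigenvectorBasis k))
        (fun n a b => eb_complete (hBpsd i n).1 a b)
    have h1 := frame_entropy_bound hρpsd w hframe
    have hval : ∀ α : N × d,
        (star (w α) ⬝ᵥ ρ *ᵥ w α).re = (hBpsd i α.1).1.eigenvalues α.2 := by
      intro α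
      rw [show w α = (A i α.1)ᴴ *ᵥ ⇑((hBpsd i α.1).1.eigenvectorBasis α.2) from rfl]
      rw [qf_conj]
      rw [show star ⇑((hBpsd i α.1).1.eigenvectorBasis α.2) ⬝ᵥ
            (A i α.1 * ρ * (A i α.1)ᴴ) *ᵥ ⇑((hBpsd i α.1).1.eigenvectorBasis α.2)
          = (((hBpsd i α.1).1.eigenvalues α.2 : ℝ) : ℂ) from qf_eigen (hBpsd i α.1).1 α.2]
      exact Complex.ofReal_re _
    calc vNE ρ ≤ ∑ α : N × d, Real.negMulLog ((star (w α) ⬝ᵥ ρ *ᵥ w α).re) := h1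
      _ = ∑ α : N × d, Real.negMulLog ((hBpsd i α.1).1.eigenvalues α.2) :=
          Finset.sum_congr rfl fun α _ => by rw [hval α]
      _ = ∑ n, ∑ k, Real.negMulLog ((hBpsd i n).1.eigenvalues k) := by
          rw [Fintype.sum_prod_type]
      _ = ∑ n, vNE (B i n) :=
          Finset.sum_congr rfl fun n _ => (vNE_eq (hBpsd i n).1).symm
  -- STEP 2
  have step2 : ∀ i, ∑ n, vNE (B i n) ≤ (∑ n, Real.negMulLog (pI i n)) + vNE (σ i) := by
    intro i
    have hτ := hσpsd i
    set v : d → d → ℂ := fun k => ⇑(hτ.1.eigenvectorBasis k) with hvdef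
    set r : d → ℝ := fun k => hτ.1.eigenvalues k with hrdef
    have hqfsum : ∀ k, ∑ n, (star (v k) ⬝ᵥ (B i n) *ᵥ v k) = ((r k : ℝ) : ℂ) := by
      intro k
      rw [← qf_sum (fun n => B i n) (v k)]
      exact qf_eigen hτ.1 k
    have hsupp : ∀ n k, r k = 0 → (star (v k) ⬝ᵥ (B i n) *ᵥ v k).re = 0 := by
      intro n k hrk
      have hsum0 : ∑ n, (star (v k) ⬝ᵥ (B i n) *ᵥ v k).re = 0 := by
        rw [← Complex.re_sum, hqfsum k, hrk]
        simp
      exact (Finset.sum_eq_zero_iff_of_nonneg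
        (fun n _ => psd_qf_re_nonneg (hBpsd i n) (v k))).mp hsum0 n (Finset.mem_univ n)
    have hk : ∀ n, vNE (B i n) ≤ Real.negMulLog (pI i n)
        + ∑ k, (- Real.log (r k)) * (star (v k) ⬝ᵥ (B i n) *ᵥ v k).re :=
      fun n => klein_bound (hBpsd i n) hτ (hσtr i) (fun k h => hsupp n k h)
    calc ∑ n, vNE (B i n)
        ≤ ∑ n, (Real.negMulLog (pI i n)
            + ∑ k, (- Real.log (r k)) * (star (v k) ⬝ᵥ (B i n) *ᵥ v k).re) :=
          Finset.sum_le_sum fun n _ => hk n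
      _ = (∑ n, Real.negMulLog (pI i n))
            + ∑ n, ∑ k, (- Real.log (r k)) * (star (v k) ⬝ᵥ (B i n) *ᵥ v k).re :=
          Finset.sum_add_distrib
      _ = (∑ n, Real.negMulLog (pI i n)) + vNE (σ i) := by
          congr 1
          rw [Finset.sum_comm]
          rw [vNE_eq hτ.1]
          refine Finset.sum_congr rfl fun k _ => ?_
          rw [← Finset.mul_sum, ← Complex.re_sum, hqfsum k, Complex.ofReal_re,
            Real.negMulLog]
          ring
  -- STEP 3 (concavity)
  have step3 : ∑ i, lam i * vNE (σ i) ≤ vNE ρ₁ := by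
    have hτ := hρ₁psd
    set v : d → d → ℂ := fun k => ⇑(hτ.1.eigenvectorBasis k) with hvdef
    set r : d → ℝ := fun k => hτ.1.eigenvalues k with hrdef
    have hρ₁tr : ρ₁.trace = 1 := by
      rw [hρ₁eq, Matrix.trace_sum]
      rw [Finset.sum_congr rfl fun i (_ : i ∈ Finset.univ) => by
        rw [Matrix.trace_smul, hσtr i, smul_eq_mul, mul_one]]
      rw [← Complex.ofReal_sum]
      rw [hlamsum]
      exact Complex.ofReal_one
    have hqfdec : ∀ k, ∑ i, ((lam i : ℝ) : ℂ) * (star (v k) ⬝ᵥ (σ i) *ᵥ v k)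
        = ((r k : ℝ) : ℂ) := by
      intro k
      have h1 : star (v k) ⬝ᵥ ρ₁ *ᵥ v k = ((r k : ℝ) : ℂ) := qf_eigen hτ.1 k
      rw [← h1]
      conv_rhs => rw [hρ₁eq]
      rw [qf_sum]
      exact Finset.sum_congr rfl fun i _ => (qf_smul _ _ _).symm
    have hqfdec_re : ∀ k, ∑ i, lam i * (star (v k) ⬝ᵥ (σ i) *ᵥ v k).re = r k := by
      intro k
      have := congrArg Complex.re (hqfdec k)
      rw [Complex.re_sum, Complex.ofReal_re] at this
      rw [← this]
      exact Finset.sum_congr rfl fun i _ => by rw [Complex.re_ofReal_mul]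
    have hsupp : ∀ i k, r k = 0 → (star (v k) ⬝ᵥ (σ i) *ᵥ v k).re = 0 := by
      intro i k hrk
      have hsum0 : ∑ i, lam i * (star (v k) ⬝ᵥ (σ i) *ᵥ v k).re = 0 := by
        rw [hqfdec_re k, hrk]
      have h0 : lam i * (star (v k) ⬝ᵥ (σ i) *ᵥ v k).re = 0 :=
        (Finset.sum_eq_zero_iff_of_nonneg (fun i _ =>
          mul_nonneg (hlam i).le (psd_qf_re_nonneg (hσpsd i) (v k)))).mp
          hsum0 i (Finset.mem_univ i)
      rcases mul_eq_zero.mp h0 with h | h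
      · exact absurd h (ne_of_gt (hlam i))
      · exact h
    have hki : ∀ i, vNE (σ i)
        ≤ ∑ k, (- Real.log (r k)) * (star (v k) ⬝ᵥ (σ i) *ᵥ v k).re := by
      intro i
      have := klein_bound (hσpsd i) hτ hρ₁tr (fun k h => hsupp i k h)
      rw [hσtr i] at this
      simpa using this
    calc ∑ i, lam i * vNE (σ i)
        ≤ ∑ i, lam i * ∑ k, (- Real.log (r k)) * (star (v k) ⬝ᵥ (σ i) *ᵥ v k).re :=
          Finset.sum_le_sum fun i _ => mul_le_mul_of_nonneg_left (hki i) (hlam i).le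
      _ = ∑ k, (- Real.log (r k)) * ∑ i, lam i * (star (v k) ⬝ᵥ (σ i) *ᵥ v k).re := by
          rw [Finset.sum_congr rfl fun i (_ : i ∈ Finset.univ) => Finset.mul_sum _ _ _]
          rw [Finset.sum_comm]
          refine Finset.sum_congr rfl fun k _ => ?_
          rw [Finset.mul_sum]
          exact Finset.sum_congr rfl fun i _ => by ring
      _ = vNE ρ₁ := by
          rw [vNE_eq hτ.1]
          refine Finset.sum_congr rfl fun k _ => ?_
          rw [hqfdec_re k, Real.negMulLog]
          ring
  -- STEP 4
  have step4 : ∑ i, lam i * (∑ n, Real.negMulLog (pI i n)) ≤ ∑ n, Real.negMulLog (p n) := by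
    have h1 : ∑ i, lam i * (∑ n, Real.negMulLog (pI i n))
        = ∑ n, ∑ i, lam i * Real.negMulLog (pI i n) := by
      rw [Finset.sum_congr rfl fun i (_ : i ∈ Finset.univ) => Finset.mul_sum _ _ _]
      exact Finset.sum_comm
    rw [h1]
    refine Finset.sum_le_sum fun n _ => ?_
    have := jensen_negMulLog lam (fun i => pI i n) (fun i => (hlam i).le) hlamsum.le
      (fun i => hpInn i n)
    rw [← hpdec n] at this
    exact this
  -- combine
  have hcomb : vNE ρ = ∑ i, lam i * vNE ρ := by
    rw [← Finset.sum_mul, hlamsum, one_mul]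
  have hmain : vNE ρ ≤ (∑ n, Real.negMulLog (p n)) + vNE ρ₁ := by
    calc vNE ρ = ∑ i, lam i * vNE ρ := hcomb
      _ ≤ ∑ i, lam i * ((∑ n, Real.negMulLog (pI i n)) + vNE (σ i)) :=
          Finset.sum_le_sum fun i _ => mul_le_mul_of_nonneg_left
            (le_trans (step1 i) (step2 i)) (hlam i).le
      _ = ∑ i, lam i * (∑ n, Real.negMulLog (pI i n)) + ∑ i, lam i * vNE (σ i) := by
          rw [← Finset.sum_add_distrib]
          exact Finset.sum_congr rfl fun i _ => mul_add _ _ _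
      _ ≤ (∑ n, Real.negMulLog (p n)) + vNE ρ₁ := add_le_add step4 step3
  linarith
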